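/- Consider the problem of minimizing $f_0(x) = \limsup_n |x_n| - 2\sum_{n \geq 1} 2^{-3n} x_n + x_0$ over the open unit ball of $\ell^\infty(\mathbb{N})$ subject to the countably many constraints $f_n(x) = 2^{-n} x_n^2 + \limsup_k |x_k| - x_0 - 2^{-3n} \leq 0$ for all $n \geq 1$. Then the point $\hat{x}$ given by $\hat{x}_0 = 0$ and $\hat{x}_n = 2^{-n}$ for $n \geq 1$ is feasible and is the unique solution: every feasible $x$ satisfies $f_0(x) \geq f_0(\hat{x})$, with equality only for $x = \hat{x}$. -/

import Mathlib

open Filter Topology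

/-- `p(x) = limsup_n |x_n|`. -/
noncomputable def pLimsup (x : ℕ → ℝ) : ℝ := Filter.limsup (fun n => |x n|) atTop

/-- The objective function `f₀`. -/
noncomputable def fObj (x : ℕ → ℝ) : ℝ :=
  pLimsup x - 2 * (∑' n : ℕ, (2 : ℝ) ^ (-(3 : ℤ) * ((n : ℤ) + 1)) * x (n + 1)) + x 0

/-- The constraint functions `f_n`, `n ≥ 1`. -/
noncomputable def fCon (n : ℕ) (x : ℕ → ℝ) : ℝ :=
  (2 : ℝ) ^ (-(n : ℤ)) * (x n) ^ 2 + pLimsup x - x 0 - (2 : ℝ) ^ (-(3 : ℤ) * (n : ℤ))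

/-- Feasibility: `x` is in the open unit ball of `ℓ^∞` and satisfies all constraints. -/
def feasible (x : ℕ → ℝ) : Prop :=
  (∃ c < (1 : ℝ), ∀ n, |x n| ≤ c) ∧ ∀ n ≥ 1, fCon n x ≤ 0

/-- The candidate solution `x̂`. -/
noncomputable def xhat : ℕ → ℝ := fun n => if n = 0 then 0 else (2 : ℝ) ^ (-(n : ℤ))

/- ### Auxiliary lemmas -/

lemma two_zpow_neg_nat (k : ℕ) : (2 : ℝ) ^ (-(k : ℤ)) = (2⁻¹ : ℝ) ^ k := by
  rw [zpow_neg, ← inv_zpow, zpow_natCast]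

lemma two_zpow_neg3_nat (k : ℕ) : (2 : ℝ) ^ (-(3 : ℤ) * (k : ℤ)) = (2⁻¹ : ℝ) ^ (3 * k) := by
  have : (-(3 : ℤ) * (k : ℤ)) = -((3 * k : ℕ) : ℤ) := by push_cast; ring
  rw [this, two_zpow_neg_nat]

lemma tsum_geo_succ {q : ℝ} (h0 : 0 ≤ q) (h1 : q < 1) :
    ∑' n : ℕ, q ^ (n + 1) = q / (1 - q) := by
  calc ∑' n : ℕ, q ^ (n + 1) = ∑' n : ℕ, q * q ^ n := by
        refine tsum_congr fun n => ?_; rw [pow_succ, mul_comm]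
    _ = q * ∑' n : ℕ, q ^ n := tsum_mul_left
    _ = q * (1 - q)⁻¹ := by rw [tsum_geometric_of_lt_one h0 h1]
    _ = q / (1 - q) := (div_eq_mul_inv _ _).symm

lemma plimsup_nonneg {x : ℕ → ℝ} (c : ℝ) (hc : ∀ n, |x n| ≤ c) : 0 ≤ pLimsup x := by
  refine le_limsup_of_frequently_le (Frequently.of_forall fun n => abs_nonneg _) ?_
  exact ⟨c, eventually_map.2 (Eventually.of_forall hc)⟩

lemma plimsup_xhat : pLimsup xhat = 0 := by
  have h : Filter.Tendsto (fun n => |xhat n|) atTop (𝓝 0) := by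
    have h2 : Filter.Tendsto (fun n : ℕ => (2⁻¹ : ℝ) ^ n) atTop (𝓝 0) := by
      apply tendsto_pow_atTop_nhds_zero_of_lt_one <;> norm_num
    refine squeeze_zero (fun n => abs_nonneg _) (fun n => ?_) h2
    unfold xhat
    by_cases hn : n = 0
    · simp [hn]
    · rw [if_neg hn, two_zpow_neg_nat, abs_of_nonneg (by positivity)]
  exact h.limsup_eq

/- ### Main theorem -/

theorem stmt_19 :
    feasible xhat ∧
    ∀ x : ℕ → ℝ, feasible x → fObj xhat ≤ fObj x ∧ (fObj x = fObj xhat → x = xhat) := by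
  -- values of xhat
  have hx0 : xhat 0 = 0 := by simp [xhat]
  have hxk : ∀ k : ℕ, xhat (k + 1) = (2⁻¹ : ℝ) ^ (k + 1) := by
    intro k; unfold xhat; rw [if_neg (Nat.succ_ne_zero k), two_zpow_neg_nat]
  -- geometric sums
  have hq2 : Summable fun n : ℕ => (2⁻¹ : ℝ) ^ n := summable_geometric_of_lt_one (by norm_num) (by norm_num)
  have hsum_half : ∑' n : ℕ, (2⁻¹ : ℝ) ^ (n + 1) = 1 := by
    rw [tsum_geo_succ (by norm_num) (by norm_num)]; norm_num
  have hsum_16 : ∑' n : ℕ, ((16 : ℝ)⁻¹) ^ (n + 1) = 1 / 15 := by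
    rw [tsum_geo_succ (by norm_num) (by norm_num)]; norm_num
  -- fObj xhat = -2/15
  have hobj_hat : fObj xhat = -(2 / 15) := by
    unfold fObj
    rw [plimsup_xhat, hx0]
    have : ∀ n : ℕ, (2 : ℝ) ^ (-(3 : ℤ) * ((n : ℤ) + 1)) * xhat (n + 1)
        = ((16 : ℝ)⁻¹) ^ (n + 1) := by
      intro n
      have h1 : (-(3 : ℤ) * ((n : ℤ) + 1)) = -(3 : ℤ) * ((n + 1 : ℕ) : ℤ) := by push_cast; ring
      rw [h1, two_zpow_neg3_nat, hxk, ← pow_add]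
      have : 3 * (n + 1) + (n + 1) = 4 * (n + 1) := by ring
      rw [this, pow_mul]
      norm_num
    rw [tsum_congr this, hsum_16]
    ring
  -- feasibility of xhat
  have hfeas : feasible xhat := by
    constructor
    · refine ⟨2⁻¹, by norm_num, fun n => ?_⟩
      cases n with
      | zero => rw [hx0]; norm_num
      | succ k =>
        rw [hxk, abs_of_nonneg (by positivity)]
        calc (2⁻¹ : ℝ) ^ (k + 1) ≤ (2⁻¹ : ℝ) ^ 1 := by
              apply pow_le_pow_of_le_one (by norm_num) (by norm_num); omega
          _ = 2⁻¹ := pow_one _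
    · intro n hn
      obtain ⟨k, rfl⟩ : ∃ k, n = k + 1 := ⟨n - 1, by omega⟩
      unfold fCon
      rw [plimsup_xhat, hx0, hxk, two_zpow_neg_nat, two_zpow_neg3_nat]
      rw [← pow_mul]
      ring_nf
      nlinarith [pow_nonneg (by norm_num : (0:ℝ) ≤ 2⁻¹) (3*(k+1))]
  refine ⟨hfeas, fun x hx => ?_⟩
  obtain ⟨⟨c, hc1, hcb⟩, hcon⟩ := hx
  have hc0 : 0 ≤ c := le_trans (abs_nonneg _) (hcb 0)
  have hp0 : 0 ≤ pLimsup x := plimsup_nonneg c hcb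
  have hpc : pLimsup x ≤ c := by
    apply limsup_le_of_le
    · have hb : IsBoundedUnder (· ≥ ·) (atTop : Filter ℕ) (fun n => |x n|) :=
        isBoundedUnder_of ⟨0, fun n => abs_nonneg (x n)⟩
      exact hb.isCoboundedUnder_le
    · exact Eventually.of_forall hcb
  set p := pLimsup x with hp
  -- the summand functions
  set g2 : ℕ → ℝ := fun n => (2⁻¹ : ℝ) ^ (2 * (n + 1)) * (x (n + 1) - (2⁻¹ : ℝ) ^ (n + 1)) ^ 2 with hg2def
  set g3 : ℕ → ℝ := fun n => (2⁻¹ : ℝ) ^ (n + 1) * fCon (n + 1) x with hg3def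
  -- summabilities
  have hsq2 : Summable g2 := by
    apply Summable.of_norm_bounded (g := fun n => (c + 1) ^ 2 * (2⁻¹ : ℝ) ^ n) (hq2.mul_left _)
    intro n
    rw [hg2def]
    simp only [Real.norm_eq_abs]
    rw [abs_of_nonneg (by positivity)]
    have h1 : (x (n + 1) - (2⁻¹ : ℝ) ^ (n + 1)) ^ 2 ≤ (c + 1) ^ 2 := by
      have := hcb (n + 1)
      have h2 : (2⁻¹ : ℝ) ^ (n + 1) ≤ 1 := by
        apply pow_le_one₀ <;> norm_num
      have h3 : (0:ℝ) ≤ (2⁻¹ : ℝ) ^ (n + 1) := by positivity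
      have := abs_le.1 this
      nlinarith
    have h2 : (2⁻¹ : ℝ) ^ (2 * (n + 1)) ≤ (2⁻¹ : ℝ) ^ n := by
      apply pow_le_pow_of_le_one (by norm_num) (by norm_num); omega
    nlinarith [pow_nonneg (by norm_num : (0:ℝ) ≤ (2⁻¹:ℝ)) (2*(n+1)), sq_nonneg (x (n+1) - (2⁻¹:ℝ)^(n+1))]
  have hsq3 : Summable g3 := by
    apply Summable.of_norm_bounded (g := fun n => (c ^ 2 + c + c + 1) * (2⁻¹ : ℝ) ^ n) (hq2.mul_left _)
    intro n
    rw [hg3def]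
    simp only [Real.norm_eq_abs]
    have hfb : |fCon (n + 1) x| ≤ c ^ 2 + c + c + 1 := by
      unfold fCon
      rw [two_zpow_neg_nat, two_zpow_neg3_nat, ← hp]
      have h1 : (0:ℝ) ≤ (2⁻¹ : ℝ) ^ (n + 1) := by positivity
      have h2 : (2⁻¹ : ℝ) ^ (n + 1) ≤ 1 := by apply pow_le_one₀ <;> norm_num
      have h3 : (0:ℝ) ≤ (2⁻¹ : ℝ) ^ (3 * (n + 1)) := by positivity
      have h4 : (2⁻¹ : ℝ) ^ (3 * (n + 1)) ≤ 1 := by apply pow_le_one₀ <;> norm_num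
      have h5 := abs_le.1 (hcb (n + 1))
      have h6 := abs_le.1 (hcb 0)
      have h7 : (x (n+1))^2 ≤ c^2 := by nlinarith [hcb (n+1), abs_nonneg (x (n+1))]
      rw [abs_le]
      constructor <;> nlinarith [sq_nonneg (x (n+1))]
    have h8 : (2⁻¹ : ℝ) ^ (n + 1) ≤ (2⁻¹ : ℝ) ^ n := by
      apply pow_le_pow_of_le_one (by norm_num) (by norm_num); omega
    rw [abs_mul, abs_of_nonneg (by positivity : (0:ℝ) ≤ (2⁻¹:ℝ)^(n+1))]
    calc (2⁻¹ : ℝ) ^ (n + 1) * |fCon (n + 1) x| ≤ (2⁻¹ : ℝ) ^ n * (c ^ 2 + c + c + 1) := by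
          apply mul_le_mul h8 hfb (abs_nonneg _) (by positivity)
      _ = (c ^ 2 + c + c + 1) * (2⁻¹ : ℝ) ^ n := mul_comm _ _
  have hst1 : Summable fun n : ℕ => (2⁻¹ : ℝ) ^ (n + 1) * (p - x 0) :=
    ((summable_nat_add_iff 1).2 hq2).mul_right _
  have hst2 : Summable fun n : ℕ => 2 * ((16 : ℝ)⁻¹) ^ (n + 1) :=
    (((summable_nat_add_iff 1).2 (summable_geometric_of_lt_one (by norm_num) (by norm_num))).mul_left 2)
  have hst3 : Summable fun n : ℕ => 2 * ((2⁻¹ : ℝ) ^ (3 * (n + 1)) * x (n + 1)) := by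
    apply Summable.mul_left
    apply Summable.of_norm_bounded (g := fun n => c * (2⁻¹ : ℝ) ^ n) (hq2.mul_left _)
    intro n
    simp only [Real.norm_eq_abs]
    rw [abs_mul, abs_of_nonneg (by positivity : (0:ℝ) ≤ (2⁻¹:ℝ)^(3*(n+1)))]
    have h8 : (2⁻¹ : ℝ) ^ (3 * (n + 1)) ≤ (2⁻¹ : ℝ) ^ n := by
      apply pow_le_pow_of_le_one (by norm_num) (by norm_num); omega
    calc (2⁻¹:ℝ)^(3*(n+1)) * |x (n+1)| ≤ (2⁻¹:ℝ)^n * c :=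
          mul_le_mul h8 (hcb _) (abs_nonneg _) (by positivity)
      _ = c * (2⁻¹:ℝ)^n := mul_comm _ _
  -- pointwise identity: g3 n - g2 n = t1 n + (t3 n - t2 n)
  have hpt : ∀ n : ℕ, g3 n - g2 n =
      (2⁻¹ : ℝ) ^ (n + 1) * (p - x 0) +
      (2 * ((2⁻¹ : ℝ) ^ (3 * (n + 1)) * x (n + 1)) - 2 * ((16 : ℝ)⁻¹) ^ (n + 1)) := by
    intro n
    rw [hg2def, hg3def]
    simp only
    unfold fCon
    rw [two_zpow_neg_nat, two_zpow_neg3_nat, ← hp]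
    have e1 : ((16 : ℝ)⁻¹) ^ (n + 1) = (2⁻¹ : ℝ) ^ (4 * (n + 1)) := by
      rw [pow_mul]; norm_num
    have e2 : (2⁻¹ : ℝ) ^ (2 * (n + 1)) = (2⁻¹ : ℝ) ^ (n+1) * (2⁻¹ : ℝ) ^ (n+1) := by
      rw [← pow_add]; ring_nf
    have e3 : (2⁻¹ : ℝ) ^ (3 * (n + 1)) = (2⁻¹ : ℝ) ^ (2*(n+1)) * (2⁻¹ : ℝ) ^ (n+1) := by
      rw [← pow_add]; ring_nf
    have e4 : (2⁻¹ : ℝ) ^ (4 * (n + 1)) = (2⁻¹ : ℝ) ^ (2*(n+1)) * (2⁻¹ : ℝ) ^ (2*(n+1)) := by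
      rw [← pow_add]; ring_nf
    rw [e1, e3, e4, e2]
    ring
  -- the series in fObj
  have hS : (∑' n : ℕ, (2 : ℝ) ^ (-(3 : ℤ) * ((n : ℤ) + 1)) * x (n + 1))
      = ∑' n : ℕ, (2⁻¹ : ℝ) ^ (3 * (n + 1)) * x (n + 1) := by
    refine tsum_congr fun n => ?_
    have h1 : (-(3 : ℤ) * ((n : ℤ) + 1)) = -(3 : ℤ) * ((n + 1 : ℕ) : ℤ) := by push_cast; ring
    rw [h1, two_zpow_neg3_nat]
  -- main identity
  have hkey : fObj x = 2 * p + (∑' n, g2 n) - (∑' n, g3 n) - 2 / 15 := by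
    have hdiff : (∑' n, g3 n) - (∑' n, g2 n)
        = ∑' n, ((2⁻¹ : ℝ) ^ (n + 1) * (p - x 0) +
            (2 * ((2⁻¹ : ℝ) ^ (3 * (n + 1)) * x (n + 1)) - 2 * ((16 : ℝ)⁻¹) ^ (n + 1))) := by
      rw [← Summable.tsum_sub hsq3 hsq2]
      exact tsum_congr hpt
    rw [Summable.tsum_add hst1 (hst3.sub hst2), Summable.tsum_sub hst3 hst2] at hdiff
    have hT1 : ∑' n : ℕ, (2⁻¹ : ℝ) ^ (n + 1) * (p - x 0) = p - x 0 := by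
      rw [tsum_mul_right, hsum_half, one_mul]
    have hT2 : ∑' n : ℕ, 2 * ((16 : ℝ)⁻¹) ^ (n + 1) = 2 / 15 := by
      rw [tsum_mul_left, hsum_16]; ring
    have hT3 : ∑' n : ℕ, 2 * ((2⁻¹ : ℝ) ^ (3 * (n + 1)) * x (n + 1))
        = 2 * ∑' n : ℕ, (2⁻¹ : ℝ) ^ (3 * (n + 1)) * x (n + 1) := tsum_mul_left
    rw [hT1, hT2, hT3] at hdiff
    unfold fObj
    rw [hS, ← hp]
    linarith [hdiff]
  -- nonnegativity facts
  have hA : 0 ≤ ∑' n, g2 n := tsum_nonneg fun n => by rw [hg2def]; positivity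
  have hB : (∑' n, g3 n) ≤ 0 := tsum_nonpos fun n => by
    rw [hg3def]
    exact mul_nonpos_of_nonneg_of_nonpos (by positivity) (hcon (n + 1) (by omega))
  constructor
  · rw [hobj_hat, hkey]; linarith
  · intro heq
    rw [hobj_hat, hkey] at heq
    have hpz : p = 0 := by linarith
    have hAz : (∑' n, g2 n) = 0 := by linarith
    have hBz : (∑' n, g3 n) = 0 := by linarith
    have hxk' : ∀ n : ℕ, x (n + 1) = (2⁻¹ : ℝ) ^ (n + 1) := by
      intro n
      have h1 : g2 n ≤ ∑' m, g2 m :=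
        Summable.le_tsum hsq2 n fun j _ => by rw [hg2def]; positivity
      have h2 : 0 ≤ g2 n := by rw [hg2def]; positivity
      have h3 : g2 n = 0 := le_antisymm (by rw [hAz] at h1; exact h1) h2
      rw [hg2def] at h3
      simp only at h3
      have h4 : (x (n + 1) - (2⁻¹ : ℝ) ^ (n + 1)) ^ 2 = 0 := by
        rcases mul_eq_zero.1 h3 with h | h
        · exact absurd h (by positivity)
        · exact h
      have := pow_eq_zero_iff (n := 2) (by norm_num) |>.1 h4
      linarith
    have hconz : fCon 1 x = 0 := by
      have hneg : (∑' m, -g3 m) = 0 := by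
        rw [tsum_neg, hBz, neg_zero]
      have h1' : -g3 0 ≤ ∑' m, -g3 m :=
        Summable.le_tsum hsq3.neg 0 fun j _ => by
          rw [hg3def]
          simp only [neg_nonneg]
          exact mul_nonpos_of_nonneg_of_nonpos (by positivity) (hcon (j + 1) (by omega))
      have h2 : g3 0 ≤ 0 := by
        rw [hg3def]
        exact mul_nonpos_of_nonneg_of_nonpos (by positivity) (hcon 1 (by omega))
      have h3 : g3 0 = 0 := le_antisymm h2 (by rw [hneg] at h1'; linarith)
      rw [hg3def] at h3
      simp only [zero_add] at h3
      rcases mul_eq_zero.1 h3 with h | h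
      · exact absurd h (by positivity)
      · exact h
    have hx0z : x 0 = 0 := by
      unfold fCon at hconz
      rw [← hp, hpz] at hconz
      rw [hxk' 0] at hconz
      norm_num at hconz
      linarith
    funext n
    cases n with
    | zero => rw [hx0z, hx0]
    | succ k => rw [hxk' k, hxk k]
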